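/- Block pseudoinverse formula: let A be a k×k symmetric positive definite matrix with A·1 = 1, and let M = [[A, -1],[-1^T, k]] (a symmetric (k+1)×(k+1) matrix with zero row sums). Then the Moore–Penrose pseudoinverse of M has top-left k×k block equal to A^{-1} − (1/(1+k))(A^{-1}11^T A^{-2} + A^{-2}11^T A^{-1}) + ((1^T A^{-3} 1)/(1+k)^2) A^{-1}11^T A^{-1}. -/

import Mathlib

open Matrix Finset

/-- `B` is the Moore–Penrose pseudoinverse of `A`. -/
def IsMoorePenrose {n : Type*} [Fintype n] (A B : Matrix n n ℝ) : Prop :=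
  A * B * A = A ∧ B * A * B = B ∧ (A * B)ᵀ = A * B ∧ (B * A)ᵀ = B * A

lemma mp_unique' {n : Type*} [Fintype n] (M B C : Matrix n n ℝ)
    (hB : IsMoorePenrose M B) (hC : IsMoorePenrose M C) : B = C := by
  obtain ⟨hB1, hB2, hB3, hB4⟩ := hB
  obtain ⟨hC1, hC2, hC3, hC4⟩ := hC
  have e1 : B = B * M * C := by
    calc B = B * M * B := hB2.symm
    _ = B * (M * B)ᵀ := by rw [hB3, Matrix.mul_assoc]
    _ = B * (((M * C * M) * B))ᵀ := by rw [hC1]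
    _ = B * ((M * B)ᵀ * (M * C)ᵀ) := by
        simp only [Matrix.transpose_mul, Matrix.mul_assoc]
    _ = B * ((M * B) * (M * C)) := by rw [hB3, hC3]
    _ = (B * M * B) * (M * C) := by simp only [Matrix.mul_assoc]
    _ = B * M * C := by rw [hB2, Matrix.mul_assoc]
  have e2 : C = B * M * C := by
    calc C = C * M * C := hC2.symm
    _ = (C * M)ᵀ * C := by rw [hC4]
    _ = ((C * (M * B * M))ᵀ) * C := by rw [hB1]
    _ = ((B * M)ᵀ * (C * M)ᵀ) * C := by
        simp only [Matrix.transpose_mul, Matrix.mul_assoc]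
    _ = ((B * M) * (C * M)) * C := by rw [hB4, hC4]
    _ = B * M * (C * M * C) := by simp only [Matrix.mul_assoc]
    _ = B * M * C := by rw [hC2]
  rw [e1, ← e2]

/-- Block pseudoinverse formula: for `A` symmetric positive definite with `A·1 = 1` and the
bordered matrix `M = [[A, -1],[-1ᵀ, k]]`, the top-left `k × k` block of `M⁺` equals
`A⁻¹ − (1/(1+k))(A⁻¹11ᵀA⁻² + A⁻²11ᵀA⁻¹) + ((1ᵀA⁻³1)/(1+k)²) A⁻¹11ᵀA⁻¹`. -/
theorem stmt_16 (k : ℕ) (A : Matrix (Fin k) (Fin k) ℝ) (hA : A.PosDef)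
    (hA1 : A *ᵥ (fun _ => (1 : ℝ)) = fun _ => (1 : ℝ))
    (P : Matrix (Fin k ⊕ Unit) (Fin k ⊕ Unit) ℝ)
    (hP : IsMoorePenrose
      (Matrix.fromBlocks A (fun _ _ => -1) (fun _ _ => -1) (fun _ _ => (k : ℝ))) P)
    (i j : Fin k) :
    P (Sum.inl i) (Sum.inl j) =
      (A⁻¹
        - (1 / (1 + (k : ℝ))) •
            (A⁻¹ * (Matrix.of fun _ _ => (1 : ℝ)) * (A⁻¹ * A⁻¹)
              + (A⁻¹ * A⁻¹) * (Matrix.of fun _ _ => (1 : ℝ)) * A⁻¹)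
        + ((∑ a, ∑ b, (A⁻¹ * A⁻¹ * A⁻¹) a b) / (1 + (k : ℝ)) ^ 2) •
            (A⁻¹ * (Matrix.of fun _ _ => (1 : ℝ)) * A⁻¹)
        : Matrix (Fin k) (Fin k) ℝ) i j := by
  have hdet : IsUnit A.det := isUnit_iff_ne_zero.mpr (ne_of_gt hA.det_pos)
  have hAB : A * A⁻¹ = 1 := Matrix.mul_nonsing_inv A hdet
  have hBA : A⁻¹ * A = 1 := Matrix.nonsing_inv_mul A hdet
  have hAt : Aᵀ = A := hA.1.eq
  have hBt : A⁻¹ᵀ = A⁻¹ := by rw [Matrix.transpose_nonsing_inv, hAt]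
  have rowA : ∀ i, ∑ j, A i j = 1 := fun i => by
    simpa [Matrix.mulVec, dotProduct] using congrFun hA1 i
  have hAs : ∀ i j, A i j = A j i := fun i j => by
    conv_lhs => rw [← hAt]
    rfl
  have colA : ∀ j, ∑ i, A i j = 1 := fun j => by
    simp only [fun i => hAs i j]; exact rowA j
  have hB1 : A⁻¹ *ᵥ (fun _ => (1 : ℝ)) = fun _ => 1 := by
    have h := congrArg (fun v => A⁻¹ *ᵥ v) hA1
    simpa [Matrix.mulVec_mulVec, hBA] using h.symm
  have rowB : ∀ i, ∑ j, A⁻¹ i j = 1 := fun i => by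
    simpa [Matrix.mulVec, dotProduct] using congrFun hB1 i
  have hBs : ∀ i j, A⁻¹ i j = A⁻¹ j i := fun i j => by
    conv_lhs => rw [← hBt]
    rfl
  have colB : ∀ j, ∑ i, A⁻¹ i j = 1 := fun j => by
    simp only [fun i => hBs i j]; exact rowB j
  set c : ℝ := ((k:ℝ)+2)/((k:ℝ)+1)^2 with hc
  set d : ℝ := 1/((k:ℝ)+1)^2 with hd
  set s : ℝ := (k:ℝ)/((k:ℝ)+1)^2 with hs
  set t : ℝ := ((k:ℝ)+1)⁻¹ with ht
  set M : Matrix (Fin k ⊕ Unit) (Fin k ⊕ Unit) ℝ :=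
    Matrix.fromBlocks A (fun _ _ => -1) (fun _ _ => -1) (fun _ _ => (k : ℝ)) with hM
  set Q : Matrix (Fin k ⊕ Unit) (Fin k ⊕ Unit) ℝ :=
    Matrix.fromBlocks (A⁻¹ - c • (Matrix.of fun _ _ => (1:ℝ)))
      (fun _ _ => -d) (fun _ _ => -d) (fun _ _ => s) with hQ
  have hk : ((k:ℝ)+1) ≠ 0 := by positivity
  have hABapply : ∀ i j, ∑ l, A i l * A⁻¹ l j = if i = j then (1:ℝ) else 0 := fun i j => by
    have := congrFun (congrFun hAB i) j
    simpa [Matrix.mul_apply, Matrix.one_apply] using this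
  have hMQ : M * Q = 1 - t • (Matrix.of fun _ _ => (1:ℝ)) := by
    ext i j
    rcases i with i | u <;> rcases j with j | v <;>
      simp [hM, hQ, Matrix.mul_apply, Fintype.sum_sum_type, Matrix.fromBlocks,
        Matrix.one_apply, Matrix.sub_apply, Matrix.smul_apply, mul_sub,
        Finset.sum_sub_distrib, hABapply, ← Finset.sum_mul, rowA, colB,
        Finset.mul_sum, Finset.sum_const, Finset.card_univ]
    · rw [hc, hd, ht]; split_ifs <;> (field_simp; ring)
    · rw [hd, hs, ht]; field_simp; ring
    · simp [Finset.sum_add_distrib, colB, Finset.sum_const, Finset.card_univ]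
      rw [hc, hd, ht]; field_simp; ring
    · rw [hd, hs, ht]; field_simp; ring
  have hMt : Mᵀ = M := by
    ext i j
    rcases i with i | u <;> rcases j with j | v <;>
      simp [hM, Matrix.fromBlocks]
    exact hAs j i
  have hQt : Qᵀ = Q := by
    ext i j
    rcases i with i | u <;> rcases j with j | v <;>
      simp [hQ, Matrix.fromBlocks]
    exact hBs j i
  have hJM : (Matrix.of fun _ _ => (1:ℝ)) * M = 0 := by
    ext i j
    rcases j with j | v <;>
      simp [hM, Matrix.mul_apply, Fintype.sum_sum_type, Matrix.fromBlocks,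
        colA, Finset.sum_const, Finset.card_univ]
  have hJQ : (Matrix.of fun _ _ => (1:ℝ)) * Q = 0 := by
    ext i j
    rcases j with j | v <;>
      simp [hQ, Matrix.mul_apply, Fintype.sum_sum_type, Matrix.fromBlocks,
        Finset.sum_add_distrib, colB, Finset.sum_const, Finset.card_univ]
    · rw [hc, hd]; field_simp; ring
    · rw [hd, hs]; field_simp; ring
  have hJt : (Matrix.of fun _ _ => (1:ℝ) : Matrix (Fin k ⊕ Unit) (Fin k ⊕ Unit) ℝ)ᵀ
      = Matrix.of fun _ _ => (1:ℝ) := by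
    ext i j; simp
  have hQM : Q * M = 1 - t • (Matrix.of fun _ _ => (1:ℝ)) := by
    calc Q * M = (Mᵀ * Qᵀ)ᵀ := by simp [Matrix.transpose_mul]
    _ = (M * Q)ᵀ := by rw [hMt, hQt]
    _ = 1 - t • (Matrix.of fun _ _ => (1:ℝ)) := by
        rw [hMQ, Matrix.transpose_sub, Matrix.transpose_one, Matrix.transpose_smul, hJt]
  have hRt : (1 - t • (Matrix.of fun _ _ => (1:ℝ)) :
      Matrix (Fin k ⊕ Unit) (Fin k ⊕ Unit) ℝ)ᵀ = 1 - t • (Matrix.of fun _ _ => (1:ℝ)) := by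
    rw [Matrix.transpose_sub, Matrix.transpose_one, Matrix.transpose_smul, hJt]
  have hQmp : IsMoorePenrose M Q := by
    refine ⟨?_, ?_, ?_, ?_⟩
    · rw [hMQ, Matrix.sub_mul, Matrix.one_mul, smul_mul_assoc, hJM, smul_zero, sub_zero]
    · rw [hQM, Matrix.sub_mul, Matrix.one_mul, smul_mul_assoc, hJQ, smul_zero, sub_zero]
    · rw [hMQ, hRt]
    · rw [hQM, hRt]
  have hPQ : P = Q := mp_unique' M P Q hP hQmp
  have hBJ : A⁻¹ * (Matrix.of fun _ _ => (1:ℝ)) = Matrix.of fun _ _ => (1:ℝ) := by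
    ext i j; simp [Matrix.mul_apply, rowB]
  have hJB : (Matrix.of fun _ _ => (1:ℝ)) * A⁻¹ = Matrix.of fun _ _ => (1:ℝ) := by
    ext i j; simp [Matrix.mul_apply, colB]
  have e1 : A⁻¹ * (Matrix.of fun _ _ => (1:ℝ)) * (A⁻¹ * A⁻¹) = Matrix.of fun _ _ => (1:ℝ) := by
    rw [hBJ, ← Matrix.mul_assoc, hJB, hJB]
  have e2 : (A⁻¹ * A⁻¹) * (Matrix.of fun _ _ => (1:ℝ)) * A⁻¹ = Matrix.of fun _ _ => (1:ℝ) := by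
    rw [Matrix.mul_assoc A⁻¹ A⁻¹, hBJ, hBJ, hJB]
  have e3 : A⁻¹ * (Matrix.of fun _ _ => (1:ℝ)) * A⁻¹ = Matrix.of fun _ _ => (1:ℝ) := by
    rw [hBJ, hJB]
  have hX1 : (A⁻¹ * A⁻¹ * A⁻¹) *ᵥ (fun _ => (1:ℝ)) = fun _ => 1 := by
    calc (A⁻¹ * A⁻¹ * A⁻¹) *ᵥ (fun _ => (1:ℝ)) = A⁻¹ *ᵥ (A⁻¹ *ᵥ (A⁻¹ *ᵥ fun _ => (1:ℝ))) := by
          simp [Matrix.mulVec_mulVec, Matrix.mul_assoc]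
    _ = fun _ => 1 := by rw [hB1, hB1, hB1]
  have hsum : (∑ a, ∑ b, (A⁻¹ * A⁻¹ * A⁻¹) a b) = (k : ℝ) := by
    have hrow : ∀ a, ∑ b, (A⁻¹ * A⁻¹ * A⁻¹) a b = 1 := fun a => by
      simpa [Matrix.mulVec, dotProduct] using congrFun hX1 a
    simp [hrow]
  rw [hPQ, e1, e2, e3, hsum]
  simp [hQ, Matrix.fromBlocks, Matrix.sub_apply, Matrix.smul_apply, Matrix.add_apply]
  rw [hc]; field_simp; ring
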